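/- If 1 + w·∑_{i=1}^n 1/a_i > 0 and all a_i > 0, then every leading principal minor of the matrix w·ee^T + diag(a) is strictly positive. -/

import Mathlib

open Matrix Finset

/-- If 1 + w·∑ 1/a_i > 0 and all a_i > 0, every leading principal minor of
w·ee^T + diag(a) is strictly positive. -/
theorem stmt_2 (n : ℕ) (hn : 1 ≤ n) (w : ℝ) (a : Fin n → ℝ) (ha : ∀ i, 0 < a i)
    (hc : 0 < 1 + w * ∑ i, (a i)⁻¹) (k : ℕ) (hk : k ≤ n) :
    0 < ((Matrix.of fun i j : Fin n => w + if i = j then a i else 0).submatrix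
      (Fin.castLE hk) (Fin.castLE hk)).det := by
  set a' : Fin k → ℝ := fun i => a (Fin.castLE hk i) with ha'
  have ha'pos : ∀ i, 0 < a' i := fun i => ha _
  -- rewrite the submatrix
  have hM : ((Matrix.of fun i j : Fin n => w + if i = j then a i else 0).submatrix
      (Fin.castLE hk) (Fin.castLE hk)) =
      Matrix.diagonal a' + Matrix.replicateCol Unit (fun _ : Fin k => w) * Matrix.replicateRow Unit (fun _ : Fin k => (1:ℝ)) := by
    ext i j
    simp only [submatrix_apply, of_apply, Matrix.add_apply, Matrix.diagonal_apply,
      Matrix.mul_apply, Matrix.replicateCol_apply, Matrix.replicateRow_apply]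
    have : (Fin.castLE hk i = Fin.castLE hk j) ↔ i = j := by
      constructor
      · intro h; exact Fin.castLE_injective hk h
      · rintro rfl; rfl
    rw [if_congr this rfl rfl]
    simp [add_comm]
    rfl
  rw [hM]
  have hdet : (Matrix.diagonal a').det = ∏ i, a' i := Matrix.det_diagonal
  have hprod : 0 < ∏ i, a' i := Finset.prod_pos (fun i _ => ha'pos i)
  have hunit : IsUnit (Matrix.diagonal a').det := by
    rw [hdet]; exact (hprod.ne').isUnit
  rw [Matrix.det_add_replicateCol_mul_replicateRow hunit]
  have hinv : (Matrix.diagonal a')⁻¹ = Matrix.diagonal fun i => (a' i)⁻¹ :=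
    Matrix.inv_eq_right_inv (by
      rw [Matrix.diagonal_mul_diagonal]
      have h1 : (fun i => a' i * (a' i)⁻¹) = fun _ => (1:ℝ) :=
        funext fun i => mul_inv_cancel₀ (ha'pos i).ne'
      rw [h1, Matrix.diagonal_one])
  have hsum : 0 < 1 + w * ∑ i, (a' i)⁻¹ := by
    rcases le_or_gt 0 w with hw | hw
    · have : 0 ≤ w * ∑ i, (a' i)⁻¹ :=
        mul_nonneg hw (Finset.sum_nonneg fun i _ => (inv_pos.mpr (ha'pos i)).le)
      linarith
    · have hle : ∑ i, (a' i)⁻¹ ≤ ∑ i, (a i)⁻¹ := by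
        have := Finset.sum_le_sum_of_subset_of_nonneg
          (s := Finset.univ.map (Fin.castLEEmb hk)) (t := Finset.univ)
          (f := fun i => (a i)⁻¹) (Finset.subset_univ _)
          (fun i _ _ => (inv_pos.mpr (ha i)).le)
        rwa [Finset.sum_map] at this
      have : w * ∑ i, (a i)⁻¹ ≤ w * ∑ i, (a' i)⁻¹ :=
        mul_le_mul_of_nonpos_left hle hw.le
      linarith
  have hval : (1 + Matrix.replicateRow Unit (fun _ : Fin k => (1:ℝ)) * (Matrix.diagonal a')⁻¹ *
      Matrix.replicateCol Unit (fun _ : Fin k => w)).det = 1 + w * ∑ i, (a' i)⁻¹ := by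
    rw [Matrix.det_unique, hinv]
    simp [Matrix.mul_apply, Matrix.one_apply, Matrix.diagonal_apply, Finset.mul_sum, mul_comm]
  rw [hval, hdet]
  exact mul_pos hprod hsum
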